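/- Weak execution models following a strict event-timing satisfy temporal precedence: Let C be a CP-theory that strictly respects a timing λ, and let κ be an event-timing of λ such that κ(r) > λ(b) for every r ∈ C and every b ∈ body_At⁻(r). Let ⟨T, I, E⟩ be a weak execution model of C such that κ(E(s)) ≤ κ(E(s')) whenever the non-leaf node s' is a descendant of the non-leaf node s. Then for every non-leaf node s and every terminal hypothetical derivation sequence ν₀,…,νₙ at s, body(E(s))^{νₙ} = t; in particular, ⟨T, I, E⟩ is an execution model of C. -/

import Mathlib

noncomputable section
open scoped Classical

namespace CP

/-- The three truth values. -/
inductive TV where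
  | f | u | t
deriving DecidableEq

namespace TV

/-- Rank of a truth value in the truth order `f ≤_t u ≤_t t`. -/
def rank : TV → ℕ
  | f => 0
  | u => 1
  | t => 2

/-- Minimum in the truth order. -/
def tmin (a b : TV) : TV := if rank a ≤ rank b then a else b

/-- Maximum in the truth order. -/
def tmax (a b : TV) : TV := if rank a ≤ rank b then b else a

/-- Kleene negation. -/
def tneg : TV → TV
  | f => t
  | u => u
  | t => f

/-- The precision order on truth values: `u ≤_p f` and `u ≤_p t` (and reflexivity). -/
def lep (a b : TV) : Prop := a = u ∨ a = b

end TV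

/-- Pointwise precision order on three-valued interpretations. -/
def leP {A : Type} (ν ν' : A → TV) : Prop := ∀ a, TV.lep (ν a) (ν' a)

/-- Propositional formulas over a type `A` of atoms. -/
inductive Form (A : Type) where
  | atom : A → Form A
  | conj : Form A → Form A → Form A
  | disj : Form A → Form A → Form A
  | neg  : Form A → Form A

namespace Form

variable {A : Type}

/-- Two-valued satisfaction of a formula in an interpretation (a set of atoms). -/
def sat (I : Set A) : Form A → Prop
  | .atom a => a ∈ I
  | .conj φ ψ => sat I φ ∧ sat I ψ
  | .disj φ ψ => sat I φ ∨ sat I ψ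
  | .neg φ => ¬ sat I φ

/-- Kleene three-valued valuation of a formula. -/
def val (ν : A → TV) : Form A → TV
  | .atom a => ν a
  | .conj φ ψ => TV.tmin (val ν φ) (val ν ψ)
  | .disj φ ψ => TV.tmax (val ν φ) (val ν ψ)
  | .neg φ => TV.tneg (val ν φ)

/-- A formula is positive if it contains no negation. -/
def Positive : Form A → Prop
  | .atom _ => True
  | .conj φ ψ => Positive φ ∧ Positive ψ
  | .disj φ ψ => Positive φ ∧ Positive ψ
  | .neg _ => False

/-- The set of atoms occurring in a formula. -/
def atoms : Form A → Set A
  | .atom a => {a}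
  | .conj φ ψ => atoms φ ∪ atoms ψ
  | .disj φ ψ => atoms φ ∪ atoms ψ
  | .neg φ => atoms φ

/-- Atoms occurring under a number of negations of parity `b` (`true` = odd). -/
def atomsPar : Bool → Form A → Set A
  | b, .atom a => if b then ∅ else {a}
  | b, .conj φ ψ => atomsPar b φ ∪ atomsPar b ψ
  | b, .disj φ ψ => atomsPar b φ ∪ atomsPar b ψ
  | b, .neg φ => atomsPar (!b) φ

/-- Atoms occurring within the scope of an odd number of negations. -/
def natoms (φ : Form A) : Set A := atomsPar true φ

end Form

/-- A CP-law: a nonempty head list of distinct atoms with probabilities in `(0,1]`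
summing to at most `1`, together with a body formula. -/
structure CPLaw (A : Type) where
  head : List (A × ℝ)
  body : Form A
  head_ne : head ≠ []
  head_nodup : (head.map Prod.fst).Nodup
  head_pos : ∀ p ∈ head, 0 < p.2 ∧ p.2 ≤ 1
  head_sum : (head.map Prod.snd).sum ≤ 1

namespace CPLaw

variable {A : Type}

/-- `head_At(r)`: the set of atoms occurring in the head of `r`. -/
def headAt (r : CPLaw A) : Set A := {a | a ∈ r.head.map Prod.fst}

/-- The sum `Σᵢ αᵢ` of the probabilities in the head of `r`. -/
def psum (r : CPLaw A) : ℝ := (r.head.map Prod.snd).sum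

end CPLaw

/-- A probabilistic process: a finite rooted tree (given by a parent function with a
depth function ensuring well-foundedness), with an interpretation, an edge probability
and a path probability attached to each node, together with (for use in execution
models) a CP-law index `rule` attached to each node and, for each non-root node, the
`choice` in the head of the rule fired at its parent that it corresponds to
(`none` is the extra child carrying the leftover probability `1 - Σᵢ αᵢ`). -/
structure Proc (A R : Type) where
  Node : Type
  [fintypeNode : Fintype Node]
  root : Node
  parent : Node → Node
  depth : Node → ℕ
  interp : Node → Set A
  prob : Node → ℝ
  pathProb : Node → ℝ
  rule : Node → R
  choice : Node → Option ℕ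
  depth_root : depth root = 0
  depth_parent : ∀ s, s ≠ root → depth s = depth (parent s) + 1
  pathProb_root : pathProb root = 1
  pathProb_parent : ∀ s, s ≠ root → pathProb s = pathProb (parent s) * prob s

attribute [instance] Proc.fintypeNode

namespace Proc

variable {A R : Type} (W : Proc A R)

/-- `s'` is a child of `s`. -/
def isChild (s' s : W.Node) : Prop := s' ≠ W.root ∧ W.parent s' = s

/-- `s` is a leaf. -/
def isLeaf (s : W.Node) : Prop := ∀ s', ¬ W.isChild s' s

/-- `strictAnc a b`: `a` is a strict ancestor of `b`. -/
def strictAnc (a b : W.Node) : Prop :=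
  Relation.TransGen (fun y x => W.isChild y x) b a

end Proc

variable {A R : Type}

/-- `R_E(s)`: the CP-laws that have not fired at any strict ancestor of `s`. -/
def RE (W : Proc A R) (s : W.Node) : Set R :=
  {r | ∀ s', W.strictAnc s' s → W.rule s' ≠ r}

/-- The CP-law `E(s)` fires at the non-leaf node `s`: `s` has exactly one child for
each head element `(Aᵢ, αᵢ)` (with interpretation `I(s) ∪ {Aᵢ}` and edge probability
`αᵢ`), plus exactly one extra child with unchanged interpretation and edge probability
`1 - Σᵢ αᵢ` in case `Σᵢ αᵢ < 1`. -/
def FiresAt (C : R → CPLaw A) (W : Proc A R) (s : W.Node) : Prop :=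
  (∀ s', W.isChild s' s →
     (∀ i, W.choice s' = some i →
        ∃ h : i < (C (W.rule s)).head.length,
          W.interp s' = insert ((C (W.rule s)).head.get ⟨i, h⟩).1 (W.interp s) ∧
          W.prob s' = ((C (W.rule s)).head.get ⟨i, h⟩).2) ∧
     (W.choice s' = none →
        (C (W.rule s)).psum < 1 ∧ W.interp s' = W.interp s ∧
          W.prob s' = 1 - (C (W.rule s)).psum)) ∧
  (∀ s₁ s₂, W.isChild s₁ s → W.isChild s₂ s → W.choice s₁ = W.choice s₂ → s₁ = s₂) ∧
  (∀ i, i < (C (W.rule s)).head.length → ∃ s', W.isChild s' s ∧ W.choice s' = some i) ∧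
  ((C (W.rule s)).psum < 1 → ∃ s', W.isChild s' s ∧ W.choice s' = none)

/-- `⟨W, I, E⟩` is a weak execution model of the CP-theory `C`. -/
def IsWEM (C : R → CPLaw A) (W : Proc A R) : Prop :=
  W.interp W.root = (∅ : Set A) ∧
  (∀ s, s ≠ W.root → 0 ≤ W.prob s ∧ W.prob s ≤ 1) ∧
  (∀ s, ¬ W.isLeaf s →
    (∑ s' ∈ Finset.univ.filter (fun s' => W.isChild s' s), W.prob s') = 1) ∧
  (∀ s, ¬ W.isLeaf s →
    W.rule s ∈ RE W s ∧ Form.sat (W.interp s) (C (W.rule s)).body ∧ FiresAt C W s) ∧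
  (∀ l, W.isLeaf l → ∀ r ∈ RE W l, ¬ Form.sat (W.interp l) (C r).body)

/-- `ν 0, …, ν n` is a hypothetical derivation sequence at node `s`. -/
def IsHDS (C : R → CPLaw A) (W : Proc A R) (s : W.Node)
    (ν : ℕ → A → TV) (n : ℕ) : Prop :=
  (∀ a, ν 0 a = if a ∈ W.interp s then TV.t else TV.f) ∧
  ∀ i, i < n → ∃ r ∈ RE W s,
    Form.val (ν i) (C r).body ≠ TV.f ∧
    (∀ p ∈ (C r).headAt, ν i p = TV.f → ν (i+1) p = TV.u) ∧
    (∀ p, ¬ (p ∈ (C r).headAt ∧ ν i p = TV.f) → ν (i+1) p = ν i p)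

/-- The hypothetical derivation sequence `ν 0, …, ν n` at `s` is terminal. -/
def HDSTerminal (C : R → CPLaw A) (W : Proc A R) (s : W.Node)
    (ν : ℕ → A → TV) (n : ℕ) : Prop :=
  ¬ ∃ r ∈ RE W s, Form.val (ν n) (C r).body ≠ TV.f ∧
      ∃ p ∈ (C r).headAt, ν n p = TV.f

/-- `⟨W, I, E⟩` is an execution model of `C`: a weak execution model in which, at every
non-leaf node, the body of the fired CP-law is not unknown in the potential of the
node (the common limit of all terminal hypothetical derivation sequences). -/
def IsExec (C : R → CPLaw A) (W : Proc A R) : Prop :=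
  IsWEM C W ∧
  ∀ s, ¬ W.isLeaf s → ∀ ν n, IsHDS C W s ν n → HDSTerminal C W s ν n →
    Form.val (ν n) (C (W.rule s)).body ≠ TV.u

/-- `π_T`: the probability distribution on interpretations induced by a process. -/
def piT (W : Proc A R) (J : Set A) : ℝ :=
  ∑ l ∈ Finset.univ.filter (fun l => W.isLeaf l ∧ W.interp l = J), W.pathProb l

/-- The CP-theory `C` respects the timing `lam`. -/
def Respects (C : R → CPLaw A) (lam : A → ℕ) : Prop :=
  ∀ r, ∀ h ∈ (C r).headAt, ∀ b ∈ (C r).body.atoms, lam b ≤ lam h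

/-- The CP-theory `C` strictly respects the timing `lam`. -/
def StrictlyRespects (C : R → CPLaw A) (lam : A → ℕ) : Prop :=
  Respects C lam ∧ ∀ r, ∀ h ∈ (C r).headAt, ∀ b ∈ (C r).body.natoms, lam b < lam h

/-- `κ` is an event-timing of the timing `lam`. -/
def IsEventTiming (C : R → CPLaw A) (lam : A → ℕ) (κ : R → ℕ) : Prop :=
  ∀ r, (∀ b ∈ (C r).body.atoms, lam b ≤ κ r) ∧ (∀ h ∈ (C r).headAt, κ r ≤ lam h)

/-- A weak execution model follows the timing `lam`: there is an event-timing `κ` of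
`lam` such that the CP-laws fire in the order imposed by `κ`. -/
def Follows (C : R → CPLaw A) (W : Proc A R) (lam : A → ℕ) : Prop :=
  ∃ κ : R → ℕ, IsEventTiming C lam κ ∧
    ∀ s s', ¬ W.isLeaf s → ¬ W.isLeaf s' → W.strictAnc s s' →
      κ (W.rule s) ≤ κ (W.rule s')

namespace TVaux

open TV

theorem tmin_eq_t : ∀ a b : TV, TV.tmin a b = TV.t ↔ a = TV.t ∧ b = TV.t := by
  intro a b
  cases a <;> cases b <;> simp [TV.tmin, TV.tmax, TV.rank]
theorem tmin_eq_f : ∀ a b : TV, TV.tmin a b = TV.f ↔ a = TV.f ∨ b = TV.f := by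
  intro a b
  cases a <;> cases b <;> simp [TV.tmin, TV.tmax, TV.rank]
theorem tmax_eq_t : ∀ a b : TV, TV.tmax a b = TV.t ↔ a = TV.t ∨ b = TV.t := by
  intro a b
  cases a <;> cases b <;> simp [TV.tmin, TV.tmax, TV.rank]
theorem tmax_eq_f : ∀ a b : TV, TV.tmax a b = TV.f ↔ a = TV.f ∧ b = TV.f := by
  intro a b
  cases a <;> cases b <;> simp [TV.tmin, TV.tmax, TV.rank]
theorem tneg_eq_t : ∀ a : TV, TV.tneg a = TV.t ↔ a = TV.f := by
  intro a
  cases a <;> simp [TV.tneg]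
theorem tneg_eq_f : ∀ a : TV, TV.tneg a = TV.f ↔ a = TV.t := by
  intro a
  cases a <;> simp [TV.tneg]

end TVaux

section FormAux

variable {A : Type}

theorem val_eq_of_agree {ν ν' : A → TV} :
    ∀ φ : Form A, (∀ a ∈ φ.atoms, ν a = ν' a) → Form.val ν φ = Form.val ν' φ := by
  intro φ
  induction φ with
  | atom a => intro h; exact h a (by simp [Form.atoms])
  | conj φ ψ ihφ ihψ =>
      intro h
      simp only [Form.val]
      rw [ihφ (fun a ha => h a (Or.inl ha)), ihψ (fun a ha => h a (Or.inr ha))]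
  | disj φ ψ ihφ ihψ =>
      intro h
      simp only [Form.val]
      rw [ihφ (fun a ha => h a (Or.inl ha)), ihψ (fun a ha => h a (Or.inr ha))]
  | neg φ ih =>
      intro h
      simp only [Form.val]
      rw [ih h]

theorem val_of_two (I : Set A) (ν : A → TV)
    (hν : ∀ a, ν a = if a ∈ I then TV.t else TV.f) :
    ∀ φ : Form A, Form.val ν φ = if Form.sat I φ then TV.t else TV.f := by
  intro φ
  induction φ with
  | atom a => by_cases ha : a ∈ I <;> simp [Form.val, Form.sat, hν a, ha]
  | conj φ ψ ihφ ihψ =>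
      by_cases h1 : Form.sat I φ <;> by_cases h2 : Form.sat I ψ <;>
        simp [Form.val, Form.sat, ihφ, ihψ, h1, h2, TV.tmin, TV.rank]
  | disj φ ψ ihφ ihψ =>
      by_cases h1 : Form.sat I φ <;> by_cases h2 : Form.sat I ψ <;>
        simp [Form.val, Form.sat, ihφ, ihψ, h1, h2, TV.tmax, TV.rank]
  | neg φ ih =>
      by_cases h : Form.sat I φ <;> simp [Form.val, Form.sat, ih, h, TV.tneg]

theorem sat_agree {I J : Set A} :
    ∀ φ : Form A, (∀ a ∈ φ.atoms, (a ∈ I ↔ a ∈ J)) → (Form.sat I φ ↔ Form.sat J φ) := by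
  intro φ
  induction φ with
  | atom a => intro h; simpa [Form.sat] using h a (by simp [Form.atoms])
  | conj φ ψ ihφ ihψ =>
      intro h
      simp only [Form.sat]
      rw [ihφ (fun a ha => h a (Or.inl ha)), ihψ (fun a ha => h a (Or.inr ha))]
  | disj φ ψ ihφ ihψ =>
      intro h
      simp only [Form.sat]
      rw [ihφ (fun a ha => h a (Or.inl ha)), ihψ (fun a ha => h a (Or.inr ha))]
  | neg φ ih =>
      intro h
      simp only [Form.sat]
      rw [ih h]

theorem val_parity :
    ∀ (φ : Form A) (b : Bool) (ν ν' : A → TV),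
      (∀ a, ν' a = ν a ∨ (ν a = TV.f ∧ ν' a = TV.u)) →
      (∀ a ∈ Form.atomsPar b φ, ν' a = ν a) →
      Form.val ν φ = (if b then TV.t else TV.f) →
      Form.val ν' φ = (if b then TV.t else TV.f) := by
  intro φ
  induction φ with
  | atom a =>
      intro b ν ν' h1 h2 h3
      cases b with
      | false =>
          have ha : ν' a = ν a := h2 a (by simp [Form.atomsPar])
          simp only [Form.val, if_neg] at h3 ⊢
          simp only [Bool.false_eq_true, if_false] at h3 ⊢
          rw [ha, h3]
      | true =>
          simp only [Form.val, if_true] at h3 ⊢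
          rcases h1 a with h | ⟨hf, _⟩
          · rw [h, h3]
          · rw [h3] at hf; cases hf
  | conj φ ψ ihφ ihψ =>
      intro b ν ν' h1 h2 h3
      have h2φ : ∀ a ∈ Form.atomsPar b φ, ν' a = ν a := fun a ha => h2 a (Or.inl ha)
      have h2ψ : ∀ a ∈ Form.atomsPar b ψ, ν' a = ν a := fun a ha => h2 a (Or.inr ha)
      cases b with
      | true =>
          simp only [Form.val, if_true] at h3 ⊢
          rw [TVaux.tmin_eq_t] at h3 ⊢
          exact ⟨ihφ true ν ν' h1 h2φ (by simpa using h3.1),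
                 (by simpa using ihψ true ν ν' h1 h2ψ (by simpa using h3.2))⟩
      | false =>
          simp only [Form.val, Bool.false_eq_true, if_false] at h3 ⊢
          rw [TVaux.tmin_eq_f] at h3 ⊢
          rcases h3 with h | h
          · exact Or.inl (by simpa using ihφ false ν ν' h1 h2φ (by simpa using h))
          · exact Or.inr (by simpa using ihψ false ν ν' h1 h2ψ (by simpa using h))
  | disj φ ψ ihφ ihψ =>
      intro b ν ν' h1 h2 h3
      have h2φ : ∀ a ∈ Form.atomsPar b φ, ν' a = ν a := fun a ha => h2 a (Or.inl ha)
      have h2ψ : ∀ a ∈ Form.atomsPar b ψ, ν' a = ν a := fun a ha => h2 a (Or.inr ha)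
      cases b with
      | true =>
          simp only [Form.val, if_true] at h3 ⊢
          rw [TVaux.tmax_eq_t] at h3 ⊢
          rcases h3 with h | h
          · exact Or.inl (by simpa using ihφ true ν ν' h1 h2φ (by simpa using h))
          · exact Or.inr (by simpa using ihψ true ν ν' h1 h2ψ (by simpa using h))
      | false =>
          simp only [Form.val, Bool.false_eq_true, if_false] at h3 ⊢
          rw [TVaux.tmax_eq_f] at h3 ⊢
          exact ⟨(by simpa using ihφ false ν ν' h1 h2φ (by simpa using h3.1)),
                 (by simpa using ihψ false ν ν' h1 h2ψ (by simpa using h3.2))⟩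
  | neg φ ih =>
      intro b ν ν' h1 h2 h3
      have h2' : ∀ a ∈ Form.atomsPar (!b) φ, ν' a = ν a := fun a ha => h2 a ha
      cases b with
      | true =>
          simp only [Form.val, if_true] at h3 ⊢
          rw [TVaux.tneg_eq_t] at h3 ⊢
          exact (by simpa using ih false ν ν' h1 (by simpa using h2') (by simpa using h3))
      | false =>
          simp only [Form.val, Bool.false_eq_true, if_false] at h3 ⊢
          rw [TVaux.tneg_eq_f] at h3 ⊢
          exact (by simpa using ih true ν ν' h1 (by simpa using h2') (by simpa using h3))

end FormAux

section TreeAux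

variable {A R : Type}

theorem depth_iterate (W : Proc A R) (s : W.Node) :
    ∀ j, j ≤ W.depth s → W.depth (W.parent^[j] s) = W.depth s - j := by
  intro j
  induction j with
  | zero => intro _; simp
  | succ j ih =>
      intro hj
      have hx := ih (by omega)
      have hne : W.parent^[j] s ≠ W.root := by
        intro h
        rw [h, W.depth_root] at hx
        omega
      have := W.depth_parent _ hne
      rw [Function.iterate_succ_apply']
      omega

theorem depth_lt_card (W : Proc A R) (s : W.Node) : W.depth s < Fintype.card W.Node := by
  have hinj : Function.Injective
      (fun i : Fin (W.depth s + 1) => W.parent^[W.depth s - (i : ℕ)] s) := by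
    intro i j hij
    have hi := depth_iterate W s (W.depth s - (i : ℕ)) (by omega)
    have hj := depth_iterate W s (W.depth s - (j : ℕ)) (by omega)
    have := congrArg W.depth hij
    simp only at this
    rw [hi, hj] at this
    have hi' : (i : ℕ) ≤ W.depth s := by omega
    have hj' : (j : ℕ) ≤ W.depth s := by omega
    apply Fin.ext
    omega
  have := Fintype.card_le_of_injective _ hinj
  simp only [Fintype.card_fin] at this
  omega

theorem exists_leaf (W : Proc A R) (s : W.Node) :
    ∃ l, W.isLeaf l ∧ (l = s ∨ W.strictAnc s l) := by
  have key : ∀ k (s : W.Node), Fintype.card W.Node - W.depth s ≤ k →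
      ∃ l, W.isLeaf l ∧ (l = s ∨ W.strictAnc s l) := by
    intro k
    induction k with
    | zero =>
        intro s hs
        have := depth_lt_card W s
        omega
    | succ k ih =>
        intro s hs
        by_cases hl : W.isLeaf s
        · exact ⟨s, hl, Or.inl rfl⟩
        · simp only [Proc.isLeaf] at hl
          push_neg at hl
          obtain ⟨s', hc⟩ := hl
          have hd := W.depth_parent s' hc.1
          rw [hc.2] at hd
          have hlt := depth_lt_card W s'
          obtain ⟨l, hll, hrel⟩ := ih s' (by omega)
          refine ⟨l, hll, Or.inr ?_⟩
          rcases hrel with rfl | h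
          · exact Relation.TransGen.single hc
          · exact h.tail hc
  exact key _ s le_rfl

theorem strictAnc_of_iterate (W : Proc A R) (y : W.Node) :
    ∀ k, 0 < k → (∀ j, j < k → W.parent^[j] y ≠ W.root) →
      W.strictAnc (W.parent^[k] y) y := by
  intro k
  induction k with
  | zero => omega
  | succ k ih =>
      intro _ hroot
      rcases Nat.eq_zero_or_pos k with rfl | hk'
      · refine Relation.TransGen.single ⟨by simpa using hroot 0 one_pos, ?_⟩
        simp [Function.iterate_succ_apply']
      · refine (ih hk' (fun j hj => hroot j (by omega))).tail
          ⟨hroot k (by omega), ?_⟩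
        rw [Function.iterate_succ_apply']

theorem strictAnc_iff (W : Proc A R) (x y : W.Node) :
    W.strictAnc x y ↔
      ∃ k, 0 < k ∧ (∀ j, j < k → W.parent^[j] y ≠ W.root) ∧ W.parent^[k] y = x := by
  constructor
  · intro h
    induction h with
    | single h =>
        refine ⟨1, one_pos, ?_, by simpa using h.2⟩
        intro j hj
        have : j = 0 := by omega
        subst this
        simpa using h.1
    | tail h1 h2 ih =>
        obtain ⟨k, hk, hroot, heq⟩ := ih
        refine ⟨k + 1, by omega, ?_, ?_⟩
        · intro j hj
          rcases Nat.lt_or_ge j k with h | h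
          · exact hroot j h
          · have : j = k := by omega
            subst this
            rw [heq]
            exact h2.1
        · rw [Function.iterate_succ_apply', heq]
          exact h2.2
  · rintro ⟨k, hk, hroot, rfl⟩
    exact strictAnc_of_iterate W y k hk hroot

end TreeAux

section TreeAux2

variable {A R : Type}

theorem anc_trichotomy (W : Proc A R) {x s l : W.Node}
    (hx : W.strictAnc x l) (hs : W.strictAnc s l) :
    W.strictAnc x s ∨ x = s ∨ W.strictAnc s x := by
  rw [strictAnc_iff] at hx hs
  obtain ⟨i, hi, hir, rfl⟩ := hx
  obtain ⟨j, hj, hjr, rfl⟩ := hs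
  rcases lt_trichotomy i j with h | h | h
  · right; right
    rw [strictAnc_iff]
    refine ⟨j - i, by omega, ?_, ?_⟩
    · intro m hm
      rw [← Function.iterate_add_apply]
      exact hjr (m + i) (by omega)
    · rw [← Function.iterate_add_apply]
      congr 1
      omega
  · right; left
    rw [h]
  · left
    rw [strictAnc_iff]
    refine ⟨i - j, by omega, ?_, ?_⟩
    · intro m hm
      rw [← Function.iterate_add_apply]
      exact hir (m + j) (by omega)
    · rw [← Function.iterate_add_apply]
      congr 1
      omega

theorem not_leaf_of_anc (W : Proc A R) {x l : W.Node} (h : W.strictAnc x l) :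
    ¬ W.isLeaf x := by
  rw [strictAnc_iff] at h
  obtain ⟨k, hk, hr, rfl⟩ := h
  intro hl
  refine hl (W.parent^[k-1] l) ⟨hr (k-1) (by omega), ?_⟩
  have hk1 : k = k - 1 + 1 := by omega
  conv_rhs => rw [hk1, Function.iterate_succ_apply']

theorem step_interp {C : R → CPLaw A} {W : Proc A R} (hW : IsWEM C W)
    {s' s : W.Node} (h : W.isChild s' s) :
    W.interp s ⊆ W.interp s' ∧
      ∀ a ∈ W.interp s', a ∈ W.interp s ∨ a ∈ (C (W.rule s)).headAt := by
  have hnl : ¬ W.isLeaf s := fun hl => hl s' h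
  obtain ⟨hsome, hnone⟩ := ((hW.2.2.2.1 s hnl).2.2.1) s' h
  cases hc : W.choice s' with
  | none =>
      obtain ⟨-, heq, -⟩ := hnone hc
      rw [heq]
      exact ⟨subset_rfl, fun a ha => Or.inl ha⟩
  | some i =>
      obtain ⟨hi, heq, -⟩ := hsome i hc
      rw [heq]
      refine ⟨Set.subset_insert _ _, ?_⟩
      intro a ha
      rcases Set.mem_insert_iff.mp ha with rfl | ha
      · right
        simp only [CPLaw.headAt, Set.mem_setOf_eq, List.mem_map]
        exact ⟨_, List.get_mem _ _, rfl⟩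
      · exact Or.inl ha

theorem desc_interp {C : R → CPLaw A} {W : Proc A R} (hW : IsWEM C W)
    {s l : W.Node} (h : W.strictAnc s l) :
    W.interp s ⊆ W.interp l ∧
      ∀ a ∈ W.interp l, a ∈ W.interp s ∨
        ∃ x, (x = s ∨ W.strictAnc s x) ∧ ¬ W.isLeaf x ∧ a ∈ (C (W.rule x)).headAt := by
  induction h with
  | single h =>
      obtain ⟨h1, h2⟩ := step_interp hW h
      refine ⟨h1, fun a ha => (h2 a ha).imp id ?_⟩
      intro hh
      exact ⟨_, Or.inl rfl, fun hl => hl _ h, hh⟩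
  | tail h1 h2 ih =>
      obtain ⟨ih1, ih2⟩ := ih
      obtain ⟨st1, st2⟩ := step_interp hW h2
      refine ⟨st1.trans ih1, ?_⟩
      intro a ha
      rcases ih2 a ha with ham | ⟨x, hx, hxnl, hhead⟩
      · rcases st2 a ham with h' | h'
        · exact Or.inl h'
        · exact Or.inr ⟨_, Or.inl rfl, fun hl => hl _ h2, h'⟩
      · refine Or.inr ⟨x, Or.inr ?_, hxnl, hhead⟩
        rcases hx with rfl | hx
        · exact Relation.TransGen.single h2
        · exact hx.tail h2

theorem nofire {C : R → CPLaw A} {lam : A → ℕ} {κ : R → ℕ} {W : Proc A R}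
    (hκ : IsEventTiming C lam κ) (hW : IsWEM C W)
    (hord : ∀ s s', ¬ W.isLeaf s → ¬ W.isLeaf s' → W.strictAnc s s' →
      κ (W.rule s) ≤ κ (W.rule s'))
    {s : W.Node} (hs : ¬ W.isLeaf s) {r : R} (hr : r ∈ RE W s)
    (hlt : κ r < κ (W.rule s)) (hsat : Form.sat (W.interp s) (C r).body) : False := by
  obtain ⟨l, hl, hrel⟩ := exists_leaf W s
  have hanc : W.strictAnc s l := by
    rcases hrel with rfl | h
    · exact absurd hl hs
    · exact h
  obtain ⟨hsub, hdec⟩ := desc_interp (C := C) hW hanc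
  have hagree : ∀ a ∈ (C r).body.atoms, (a ∈ W.interp s ↔ a ∈ W.interp l) := by
    intro a ha
    constructor
    · intro h'
      exact hsub h'
    · intro hal
      rcases hdec a hal with h' | ⟨x, hx, hxnl, hhead⟩
      · exact h'
      · exfalso
        have h1 : lam a ≤ κ r := (hκ r).1 a ha
        have h2 : κ (W.rule x) ≤ lam a := (hκ (W.rule x)).2 a hhead
        have h3 : κ (W.rule s) ≤ κ (W.rule x) := by
          rcases hx with rfl | hx
          · exact le_rfl
          · exact hord s x hs hxnl hx
        omega
  have hsatl : Form.sat (W.interp l) (C r).body :=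
    (sat_agree (C r).body hagree).mp hsat
  have hre : r ∈ RE W l := by
    intro x hx he
    rcases anc_trichotomy W hx hanc with h' | rfl | h'
    · exact hr x h' he
    · rw [he] at hlt
      omega
    · have := hord s x hs (not_leaf_of_anc W hx) h'
      rw [he] at this
      omega
  exact hW.2.2.2.2 l hl r hre hsatl

end TreeAux2

/-- Weak execution models following a strict event-timing satisfy temporal precedence:
if `C` strictly respects `lam`, `κ` is an event-timing of `lam` that is strictly above
the times of all negated body atoms, and the weak execution model `W` fires its events
in the order imposed by `κ`, then at every non-leaf node the body of the fired CP-law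
is true in the potential; in particular `W` is an execution model of `C`. -/
theorem strict_event_timing_temporal_precedence
    {A R : Type} [Fintype A] [Fintype R]
    (C : R → CPLaw A) (lam : A → ℕ) (hstr : StrictlyRespects C lam)
    (κ : R → ℕ) (hκ : IsEventTiming C lam κ)
    (hκneg : ∀ r, ∀ b ∈ (C r).body.natoms, lam b < κ r)
    (W : Proc A R) (hW : IsWEM C W)
    (hord : ∀ s s', ¬ W.isLeaf s → ¬ W.isLeaf s' → W.strictAnc s s' →
      κ (W.rule s) ≤ κ (W.rule s')) :
    (∀ s, ¬ W.isLeaf s → ∀ (ν : ℕ → A → TV) (n : ℕ),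
      IsHDS C W s ν n → HDSTerminal C W s ν n →
      Form.val (ν n) (C (W.rule s)).body = TV.t) ∧
    IsExec C W := by
  have main : ∀ s, ¬ W.isLeaf s → ∀ (ν : ℕ → A → TV) (n : ℕ),
      IsHDS C W s ν n → HDSTerminal C W s ν n →
      Form.val (ν n) (C (W.rule s)).body = TV.t := by
    intro s hs ν n hhds _
    obtain ⟨hν0, hstep⟩ := hhds
    have inv : ∀ i, i ≤ n → ∀ p,
        (ν i p = ν 0 p ∨ (ν 0 p = TV.f ∧ ν i p = TV.u)) ∧
        (ν i p = TV.u → κ (W.rule s) ≤ lam p) := by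
      intro i
      induction i with
      | zero =>
          intro _ p
          refine ⟨Or.inl rfl, fun hu => ?_⟩
          rw [hν0 p] at hu
          split at hu <;> cases hu
      | succ i ih =>
          intro hin p
          have ihp := ih (by omega)
          obtain ⟨r, hrRE, hbody, hupd, hkeep⟩ := hstep i (by omega)
          have hκr : κ (W.rule s) ≤ κ r := by
            by_contra hlt
            push_neg at hlt
            have hag : ∀ a ∈ (C r).body.atoms, ν i a = ν 0 a := by
              intro a ha
              rcases (ihp a).1 with h | ⟨_, hu⟩
              · exact h
              · have h1 := (ihp a).2 hu
                have h2 := (hκ r).1 a ha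
                omega
            have hvi : Form.val (ν i) (C r).body = Form.val (ν 0) (C r).body :=
              val_eq_of_agree _ hag
            have hv0 := val_of_two (W.interp s) (ν 0) hν0 (C r).body
            have hsat : Form.sat (W.interp s) (C r).body := by
              by_contra hns
              rw [hvi, hv0, if_neg hns] at hbody
              exact hbody rfl
            exact nofire hκ hW hord hs hrRE hlt hsat
          constructor
          · by_cases hp : p ∈ (C r).headAt ∧ ν i p = TV.f
            · right
              have h0 : ν 0 p = TV.f := by
                rcases (ihp p).1 with h | ⟨h, _⟩
                · rw [← h]; exact hp.2
                · exact h
              exact ⟨h0, hupd p hp.1 hp.2⟩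
            · rw [hkeep p hp]
              exact (ihp p).1
          · intro hu
            by_cases hp : p ∈ (C r).headAt ∧ ν i p = TV.f
            · exact le_trans hκr ((hκ r).2 p hp.1)
            · rw [hkeep p hp] at hu
              exact (ihp p).2 hu
    have hsatbody : Form.sat (W.interp s) (C (W.rule s)).body :=
      (hW.2.2.2.1 s hs).2.1
    have hv0 : Form.val (ν 0) (C (W.rule s)).body = TV.t := by
      rw [val_of_two (W.interp s) (ν 0) hν0, if_pos hsatbody]
    have h1 : ∀ a, ν n a = ν 0 a ∨ (ν 0 a = TV.f ∧ ν n a = TV.u) :=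
      fun a => (inv n le_rfl a).1
    have h2 : ∀ a ∈ Form.atomsPar true (C (W.rule s)).body, ν n a = ν 0 a := by
      intro a ha
      have hlt := hκneg (W.rule s) a ha
      rcases h1 a with h | ⟨_, hu⟩
      · exact h
      · have := (inv n le_rfl a).2 hu
        omega
    simpa using val_parity (C (W.rule s)).body true (ν 0) (ν n) h1 h2 (by simpa using hv0)
  refine ⟨main, hW, ?_⟩
  intro s hs ν n h1 h2
  rw [main s hs ν n h1 h2]
  decide


end CP
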